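/- Let f̂, ĝ: Ω ⊆ ℝ → I(ℝ) be gH-differentiable at x with f̲, f̅, g̲, g̅ differentiable at x, f̂ being μ-increasing near x and ĝ being μ-decreasing near x. Then (f̂ ⊕ ĝ)'(x) = f̂'(x) ⊖_gH ((−1)·ĝ'(x)), i.e., the gH-derivative of the Minkowski sum equals the gH-difference of f̂'(x) and the negation of ĝ'(x). -/

import Mathlib

open Filter

/-- If `f̂` is gH-differentiable at `x` with gH-derivative `[Flo, Fhi]` and μ-increasing
near `x`, `ĝ` is gH-differentiable at `x` with gH-derivative `[Glo, Ghi]` and μ-decreasing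
near `x` (endpoint functions differentiable at `x`), then
`(f̂ ⊕ ĝ)'(x) = f̂'(x) ⊖_gH ((−1)·ĝ'(x))`, i.e. the gH-derivative of the Minkowski sum is
the interval `[min{Flo+Ghi, Fhi+Glo}, max{Flo+Ghi, Fhi+Glo}]`
(`(−1)·[Glo,Ghi] = [−Ghi,−Glo]` and `[Flo,Fhi] ⊖_gH [−Ghi,−Glo]` computed endpoint-wise). -/
theorem gH_deriv_add_differently_monotonic
    (flo fhi glo ghi : ℝ → ℝ) (hfle : ∀ t, flo t ≤ fhi t) (hgle : ∀ t, glo t ≤ ghi t)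
    (x : ℝ) (U : Set ℝ) (hU : U ∈ nhds x)
    (hfmono : MonotoneOn (fun t => fhi t - flo t) U)
    (hgmono : AntitoneOn (fun t => ghi t - glo t) U)
    (dflo dfhi dglo dghi Flo Fhi Glo Ghi : ℝ)
    (hdflo : HasDerivAt flo dflo x) (hdfhi : HasDerivAt fhi dfhi x)
    (hdglo : HasDerivAt glo dglo x) (hdghi : HasDerivAt ghi dghi x)
    (hF : Tendsto (fun h : ℝ =>
          min ((flo (x + h) - flo x) / h) ((fhi (x + h) - fhi x) / h))
        (nhdsWithin 0 {(0:ℝ)}ᶜ) (nhds Flo) ∧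
      Tendsto (fun h : ℝ =>
          max ((flo (x + h) - flo x) / h) ((fhi (x + h) - fhi x) / h))
        (nhdsWithin 0 {(0:ℝ)}ᶜ) (nhds Fhi))
    (hG : Tendsto (fun h : ℝ =>
          min ((glo (x + h) - glo x) / h) ((ghi (x + h) - ghi x) / h))
        (nhdsWithin 0 {(0:ℝ)}ᶜ) (nhds Glo) ∧
      Tendsto (fun h : ℝ =>
          max ((glo (x + h) - glo x) / h) ((ghi (x + h) - ghi x) / h))
        (nhdsWithin 0 {(0:ℝ)}ᶜ) (nhds Ghi)) :
    Tendsto (fun h : ℝ =>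
        min (((flo (x + h) + glo (x + h)) - (flo x + glo x)) / h)
            (((fhi (x + h) + ghi (x + h)) - (fhi x + ghi x)) / h))
      (nhdsWithin 0 {(0:ℝ)}ᶜ) (nhds (min (Flo - (-Ghi)) (Fhi - (-Glo)))) ∧
    Tendsto (fun h : ℝ =>
        max (((flo (x + h) + glo (x + h)) - (flo x + glo x)) / h)
            (((fhi (x + h) + ghi (x + h)) - (fhi x + ghi x)) / h))
      (nhdsWithin 0 {(0:ℝ)}ᶜ) (nhds (max (Flo - (-Ghi)) (Fhi - (-Glo)))) := by

  -- Difference quotients converge to the derivatives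
  have quot : ∀ (f : ℝ → ℝ) (d : ℝ), HasDerivAt f d x →
      Tendsto (fun h : ℝ => (f (x + h) - f x) / h) (nhdsWithin 0 {(0:ℝ)}ᶜ) (nhds d) := by
    intro f d hd
    have hmap : Tendsto (fun h : ℝ => x + h) (nhdsWithin 0 {(0:ℝ)}ᶜ)
        (nhdsWithin x {x}ᶜ) := by
      rw [tendsto_nhdsWithin_iff]
      constructor
      · have : Tendsto (fun h : ℝ => x + h) (nhds 0) (nhds (x + 0)) :=
          (continuous_const.add continuous_id).continuousAt
        simpa using this.mono_left nhdsWithin_le_nhds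
      · filter_upwards [self_mem_nhdsWithin] with h hh
        simp only [Set.mem_compl_iff, Set.mem_singleton_iff] at hh ⊢
        intro hc; exact hh (by linarith)
    have := (hasDerivAt_iff_tendsto_slope.mp hd).comp hmap
    refine this.congr fun h => ?_
    simp [Function.comp, slope_def_field]
  have hfloq := quot flo dflo hdflo
  have hfhiq := quot fhi dfhi hdfhi
  have hgloq := quot glo dglo hdglo
  have hghiq := quot ghi dghi hdghi
  -- eventually x + h ∈ U and h ≠ 0
  have hxU : x ∈ U := mem_of_mem_nhds hU
  have hev : ∀ᶠ h in nhdsWithin 0 {(0:ℝ)}ᶜ, (x + h ∈ U ∧ h ≠ 0) := by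
    have h1 : {h : ℝ | x + h ∈ U} ∈ nhds (0:ℝ) := by
      have : ContinuousAt (fun h : ℝ => x + h) 0 :=
        (continuous_const.add continuous_id).continuousAt
      have := this.preimage_mem_nhds (by simpa using hU)
      exact this
    filter_upwards [nhdsWithin_le_nhds h1, self_mem_nhdsWithin] with h h1 h2
    exact ⟨h1, by simpa using h2⟩
  -- on that set, the f-quotients are ordered lo ≤ hi
  have hford : ∀ h : ℝ, x + h ∈ U → h ≠ 0 →
      (flo (x + h) - flo x) / h ≤ (fhi (x + h) - fhi x) / h := by
    intro h hhU hh0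
    rcases lt_or_gt_of_ne hh0 with hneg | hpos
    · have hsp : fhi (x + h) - flo (x + h) ≤ fhi x - flo x :=
        hfmono hhU hxU (by linarith)
      rw [div_le_div_right_of_neg hneg]; linarith
    · have hsp : fhi x - flo x ≤ fhi (x + h) - flo (x + h) :=
        hfmono hxU hhU (by linarith)
      rw [div_le_div_iff_of_pos_right hpos]; linarith
  -- on that set, the g-quotients are ordered hi ≤ lo
  have hgord : ∀ h : ℝ, x + h ∈ U → h ≠ 0 →
      (ghi (x + h) - ghi x) / h ≤ (glo (x + h) - glo x) / h := by
    intro h hhU hh0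
    rcases lt_or_gt_of_ne hh0 with hneg | hpos
    · have hsp : ghi x - glo x ≤ ghi (x + h) - glo (x + h) :=
        hgmono hhU hxU (by linarith)
      rw [div_le_div_right_of_neg hneg]; linarith
    · have hsp : ghi (x + h) - glo (x + h) ≤ ghi x - glo x :=
        hgmono hxU hhU (by linarith)
      rw [div_le_div_iff_of_pos_right hpos]; linarith
  -- identify Flo, Fhi, Glo, Ghi
  have hFlo : Flo = dflo := by
    refine tendsto_nhds_unique (hF.1.congr' ?_) hfloq
    filter_upwards [hev] with h ⟨h1, h2⟩
    exact min_eq_left (hford h h1 h2)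
  have hFhi : Fhi = dfhi := by
    refine tendsto_nhds_unique (hF.2.congr' ?_) hfhiq
    filter_upwards [hev] with h ⟨h1, h2⟩
    exact max_eq_right (hford h h1 h2)
  have hGlo : Glo = dghi := by
    refine tendsto_nhds_unique (hG.1.congr' ?_) hghiq
    filter_upwards [hev] with h ⟨h1, h2⟩
    exact min_eq_right (hgord h h1 h2)
  have hGhi : Ghi = dglo := by
    refine tendsto_nhds_unique (hG.2.congr' ?_) hgloq
    filter_upwards [hev] with h ⟨h1, h2⟩
    exact max_eq_left (hgord h h1 h2)
  -- sum quotients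
  have hsumlo : Tendsto (fun h : ℝ =>
      ((flo (x + h) + glo (x + h)) - (flo x + glo x)) / h)
      (nhdsWithin 0 {(0:ℝ)}ᶜ) (nhds (dflo + dglo)) := by
    refine (hfloq.add hgloq).congr fun h => ?_
    ring
  have hsumhi : Tendsto (fun h : ℝ =>
      ((fhi (x + h) + ghi (x + h)) - (fhi x + ghi x)) / h)
      (nhdsWithin 0 {(0:ℝ)}ᶜ) (nhds (dfhi + dghi)) := by
    refine (hfhiq.add hghiq).congr fun h => ?_
    ring
  subst hFlo hFhi hGlo hGhi
  constructor
  · have := hsumlo.min hsumhi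
    simpa [sub_neg_eq_add] using this
  · have := hsumlo.max hsumhi
    simpa [sub_neg_eq_add] using this
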